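/- Let G be a graph, k a positive integer, and G' obtained from G by adding, for each vertex f in a designated set F ⊆ V(G), new vertices f', f_1, …, f_{2k} with edges (f, f_i) and (f', f_i) for 1 ≤ i ≤ 2k. Then a set S with 1 ≤ |S| ≤ k is a defensive alliance in G avoiding F if and only if S is a defensive alliance in G' of the same size (and such an S automatically avoids F and all new vertices). -/

import Mathlib

def closedNbhd {V : Type*} [Fintype V] [DecidableEq V] (G : SimpleGraph V)
    [DecidableRel G.Adj] (v : V) : Finset V :=
  insert v (G.neighborFinset v)

def IsDefensiveAlliance {V : Type*} [Fintype V] [DecidableEq V] (G : SimpleGraph V)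
    [DecidableRel G.Adj] (S : Finset V) : Prop :=
  ∀ v ∈ S, (closedNbhd G v \ S).card ≤ (closedNbhd G v ∩ S).card
/-- The graph G' obtained from G by adding, for each f ∈ F, fresh vertices
f' (= Sum.inr (f, Sum.inl ())) and f_1, …, f_{2k} (= Sum.inr (f, Sum.inr i)),
with edges (f, f_i) and (f', f_i). -/
def extGraphF {V : Type*} [DecidableEq V] (G : SimpleGraph V) (F : Finset V) (k : ℕ) :
    SimpleGraph (V ⊕ ({x // x ∈ F} × (Unit ⊕ Fin (2 * k)))) where
  Adj x y :=
    match x, y with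
    | .inl u, .inl v => G.Adj u v
    | .inl u, .inr (g, .inr _) => u = g.val
    | .inr (g, .inr _), .inl u => u = g.val
    | .inr (g, .inl _), .inr (g', .inr _) => g = g'
    | .inr (g, .inr _), .inr (g', .inl _) => g = g'
    | _, _ => False
  symm := by
    refine ⟨?_⟩
    rintro (u | ⟨g, (u | u)⟩) (v | ⟨g', (v | v)⟩) h <;>
      first | exact G.symm h | exact h | exact h.symm | exact h.elim
  loopless := by
    refine ⟨?_⟩
    rintro (u | ⟨g, (u | u)⟩) h
    · exact G.loopless.irrefl u h
    · exact h
    · exact h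

instance {V : Type*} [DecidableEq V] (G : SimpleGraph V) [DecidableRel G.Adj]
    (F : Finset V) (k : ℕ) : DecidableRel (extGraphF G F k).Adj := fun x y =>
  match x, y with
  | .inl u, .inl v => inferInstanceAs (Decidable (G.Adj u v))
  | .inl u, .inr (g, .inr _) => inferInstanceAs (Decidable (u = g.val))
  | .inr (g, .inr _), .inl u => inferInstanceAs (Decidable (u = g.val))
  | .inr (g, .inl _), .inr (g', .inr _) => inferInstanceAs (Decidable (g = g'))
  | .inr (g, .inr _), .inr (g', .inl _) => inferInstanceAs (Decidable (g = g'))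
  | .inl _, .inr (_, .inl _) => inferInstanceAs (Decidable False)
  | .inr (_, .inl _), .inl _ => inferInstanceAs (Decidable False)
  | .inr (_, .inl _), .inr (_, .inl _) => inferInstanceAs (Decidable False)
  | .inr (_, .inr _), .inr (_, .inr _) => inferInstanceAs (Decidable False)

lemma finsetMapSdiff {α β : Type*} [DecidableEq α] [DecidableEq β] (f : α ↪ β)
    (A B : Finset α) : (A \ B).map f = A.map f \ B.map f := by
  ext x
  simp only [Finset.mem_map, Finset.mem_sdiff]
  constructor
  · rintro ⟨a, ⟨haA, haB⟩, rfl⟩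
    exact ⟨⟨a, haA, rfl⟩, fun ⟨b, hbB, hb⟩ => haB (f.injective hb ▸ hbB)⟩
  · rintro ⟨⟨a, haA, rfl⟩, h⟩
    exact ⟨a, ⟨haA, fun haB => h ⟨a, haB, rfl⟩⟩, rfl⟩

theorem extGraphF_defensiveAlliance_iff {V : Type*} [Fintype V] [DecidableEq V]
    (G : SimpleGraph V) [DecidableRel G.Adj] (F : Finset V) (k : ℕ) (hk : 1 ≤ k)
    (S : Finset V) (hS1 : 1 ≤ S.card) (hSk : S.card ≤ k) :
    (IsDefensiveAlliance G S ∧ ∀ x ∈ S, x ∉ F) ↔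
    IsDefensiveAlliance (extGraphF G F k)
      (S.map ⟨Sum.inl, Sum.inl_injective⟩) := by
  classical
  set f : V ↪ (V ⊕ ({x // x ∈ F} × (Unit ⊕ Fin (2 * k)))) :=
    ⟨Sum.inl, Sum.inl_injective⟩ with hf
  have hnb : ∀ v ∉ F, (extGraphF G F k).neighborFinset (Sum.inl v)
      = (G.neighborFinset v).map f := by
    intro v hv
    ext x
    cases x with
    | inl u =>
      simp only [SimpleGraph.mem_neighborFinset, Finset.mem_map]
      constructor
      · intro h
        exact ⟨u, h, rfl⟩
      · rintro ⟨a, ha, hae⟩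
        cases hf ▸ hae
        exact ha
    | inr p =>
      obtain ⟨g, (u|i)⟩ := p
      · simp only [SimpleGraph.mem_neighborFinset, Finset.mem_map]
        constructor
        · intro h; exact h.elim
        · rintro ⟨a, _, hae⟩; cases hf ▸ hae
      · simp only [SimpleGraph.mem_neighborFinset, Finset.mem_map]
        constructor
        · intro h
          exact absurd (h ▸ g.2) hv
        · rintro ⟨a, _, hae⟩; cases hf ▸ hae
  have hclosed : ∀ v ∉ F, closedNbhd (extGraphF G F k) (Sum.inl v)
      = (closedNbhd G v).map f := by
    intro v hv
    rw [closedNbhd, closedNbhd, hnb v hv, Finset.map_insert]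
    rfl
  constructor
  · rintro ⟨hdef, hF⟩ x hx
    simp only [Finset.mem_map] at hx
    obtain ⟨v, hvS, rfl⟩ := hx
    rw [show f v = Sum.inl v from rfl, hclosed v (hF v hvS), ← finsetMapSdiff f, ← Finset.map_inter,
      Finset.card_map, Finset.card_map]
    exact hdef v hvS
  · intro hdef
    have hF : ∀ x ∈ S, x ∉ F := by
      intro v hvS hvF
      have h := hdef (Sum.inl v) (Finset.mem_map_of_mem f hvS)
      have hsub : ((Finset.univ : Finset (Fin (2 * k))).map
          ⟨fun i => (Sum.inr (⟨v, hvF⟩, Sum.inr i) :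
            V ⊕ ({x // x ∈ F} × (Unit ⊕ Fin (2 * k)))),
            by intro a b hab; simpa using hab⟩)
          ⊆ closedNbhd (extGraphF G F k) (Sum.inl v) \ S.map f := by
        intro x hx
        simp only [Finset.mem_map, Finset.mem_univ, true_and,
          Function.Embedding.coeFn_mk] at hx
        obtain ⟨i, rfl⟩ := hx
        rw [Finset.mem_sdiff]
        refine ⟨?_, ?_⟩
        · rw [closedNbhd, Finset.mem_insert]
          right
          rw [SimpleGraph.mem_neighborFinset]
          show v = (⟨v, hvF⟩ : {x // x ∈ F}).val
          rfl
        · simp [hf]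
      have h1 : 2 * k ≤ (closedNbhd (extGraphF G F k) (Sum.inl v) \ S.map f).card := by
        have := Finset.card_le_card hsub
        simpa using this
      have h2 : (closedNbhd (extGraphF G F k) (Sum.inl v) ∩ S.map f).card ≤ k := by
        calc (closedNbhd (extGraphF G F k) (Sum.inl v) ∩ S.map f).card
            ≤ (S.map f).card := Finset.card_le_card Finset.inter_subset_right
          _ = S.card := Finset.card_map f
          _ ≤ k := hSk
      omega
    refine ⟨?_, hF⟩
    intro v hv
    have h := hdef (Sum.inl v) (Finset.mem_map_of_mem f hv)
    rw [hclosed v (hF v hv), ← finsetMapSdiff f, ← Finset.map_inter,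
      Finset.card_map, Finset.card_map] at h
    exact h
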